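/- Let Σ be a coded system such that the set of sequences in Σ containing no occurrence of any synchronizing word is a subshift whose topological entropy is strictly less than h_top(Σ). Then Σ is a weak-QFT. -/

import Mathlib

open Filter Set MeasureTheory

namespace QFTPaper

variable {A : Type*} {B : Type*}

/-- The left shift on bi-infinite sequences over the alphabet `A`. -/
def shift (x : ℤ → A) : ℤ → A := fun n => x (n + 1)

/-- A subshift: a closed, shift-invariant subset of `A^ℤ`. -/
def IsSubshift [TopologicalSpace A] (X : Set (ℤ → A)) : Prop :=
  IsClosed X ∧ shift '' X = X

/-- The finite word `w` occurs in `x` at position `k`. -/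
def OccursAt (w : List A) (x : ℤ → A) (k : ℤ) : Prop :=
  ∀ i : Fin w.length, x (k + (i : ℕ)) = w.get i

/-- The language of `X`: words of length `n` occurring in elements of `X`
(at position `0`, which is no restriction by shift-invariance). -/
def Lang (X : Set (ℤ → A)) (n : ℕ) : Set (List A) :=
  { w | w.length = n ∧ ∃ x ∈ X, OccursAt w x 0 }

/-- Topological entropy of a subshift. -/
noncomputable def hTop (X : Set (ℤ → A)) : ℝ :=
  limsup (fun n : ℕ => Real.log (Nat.card ↥(Lang X n)) / (n : ℝ)) atTop

/-- Follower set of the finite word `w = A₋ₙ…A₀` (listed from `A₋ₙ` to `A₀`):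
the set of one-sided sequences `B₀B₁B₂…` with `B ∈ X` and `B₋ₙ…B₀ = A₋ₙ…A₀`,
realized by requiring `w` to occur in `B` at positions `0,…,n` and reading off
the tail of `B` starting at the position of the last letter of `w`.
For the empty word this gives `X₊` (by shift-invariance). -/
def fol (X : Set (ℤ → A)) (w : List A) : Set (ℕ → A) :=
  { y | ∃ B ∈ X, (∀ i : Fin w.length, B ((i : ℕ) : ℤ) = w.get i) ∧
        ∀ k : ℕ, y k = B ((w.length : ℤ) - 1 + (k : ℤ)) }

/-- `w = A₋ₙ…A₀` is a left constraint:
`∅ ≠ fol(A₋ₙ…A₀) ⊊ fol(A₋ₙ₊₁…A₀)`. -/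
def IsLeftConstraint (X : Set (ℤ → A)) (w : List A) : Prop :=
  w ≠ [] ∧ fol X w ≠ ∅ ∧ fol X w ⊂ fol X w.tail

/-- `𝒞(X, n)`: the set of left constraints of length `n`. -/
def LC (X : Set (ℤ → A)) (n : ℕ) : Set (List A) :=
  { w | w.length = n ∧ IsLeftConstraint X w }

/-- The left constraint entropy `h_𝒞(X) = limsup (1/n) log⁺ #𝒞(X,n)`. -/
noncomputable def hC (X : Set (ℤ → A)) : ℝ :=
  limsup (fun n : ℕ => max 0 (Real.log (Nat.card ↥(LC X n))) / (n : ℝ)) atTop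

/-- The time-reversed subshift `X̄`. -/
def rev (X : Set (ℤ → A)) : Set (ℤ → A) :=
  (fun x : ℤ → A => fun n : ℤ => x (-n)) '' X

/-- The symmetric constraint entropy `h_𝒮𝒞(X) = min (h_𝒞(X), h_𝒞(X̄))`. -/
noncomputable def hSC (X : Set (ℤ → A)) : ℝ := min (hC X) (hC (rev X))

/-- Subshift of quasi-finite type: `h_𝒮𝒞(X) < h_top(X)`. -/
def IsQFT [TopologicalSpace A] (X : Set (ℤ → A)) : Prop :=
  IsSubshift X ∧ hSC X < hTop X

/-- The word `B₋ₘ…B₀` read off from a one-sided past `b` (where `b j = B₋ⱼ`). -/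
def wordOf (b : ℕ → A) (m : ℕ) : List A :=
  (List.range (m + 1)).map fun j => b (m - j)

/-- An extendable left constraint: a left constraint `A₋ₙ…A₀` which admits a
one-sided past `B` extending it such that `B₋ₘ…B₀` is again a left constraint
for infinitely many `m`. -/
def IsExtendable (X : Set (ℤ → A)) (w : List A) : Prop :=
  IsLeftConstraint X w ∧
  ∃ b : ℕ → A, wordOf b (w.length - 1) = w ∧
    ∀ N : ℕ, ∃ m, N ≤ m ∧ IsLeftConstraint X (wordOf b m)

/-- `𝒞*(X, n)`: the set of extendable left constraints of length `n`. -/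
def ELC (X : Set (ℤ → A)) (n : ℕ) : Set (List A) :=
  { w | w.length = n ∧ IsExtendable X w }

/-- The extendable left constraint entropy `h*_𝒞(X)`. -/
noncomputable def hCstar (X : Set (ℤ → A)) : ℝ :=
  limsup (fun n : ℕ => Real.log (Nat.card ↥(ELC X n)) / (n : ℝ)) atTop

/-- `h*_𝒮𝒞(X) = min (h*_𝒞(X), h*_𝒞(X̄))`. -/
noncomputable def hSCstar (X : Set (ℤ → A)) : ℝ := min (hCstar X) (hCstar (rev X))

/-- Subshift of weak quasi-finite type: `h*_𝒮𝒞(X) < h_top(X)`. -/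
def IsWeakQFT [TopologicalSpace A] (X : Set (ℤ → A)) : Prop :=
  IsSubshift X ∧ hSCstar X < hTop X

/-- Subshift of finite type: defined by excluding a finite set of finite words. -/
def IsSFT (X : Set (ℤ → A)) : Prop :=
  ∃ F : Finset (List A), X = { x | ∀ w ∈ F, ∀ k : ℤ, ¬ OccursAt w x k }

/-- Sofic subshift: the image of an SFT under a continuous shift-commuting map. -/
def IsSofic [TopologicalSpace A] (X : Set (ℤ → A)) : Prop :=
  ∃ (B : Type) (_ : Fintype B) (Y : Set (ℤ → B)) (π : (ℤ → B) → (ℤ → A)),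
    IsSFT Y ∧
    (letI : TopologicalSpace B := ⊥
     Continuous π) ∧
    (∀ x : ℤ → B, π (shift x) = shift (π x)) ∧ π '' Y = X


/-- Topological conjugacy of subshifts: a homeomorphism commuting with the shifts. -/
def Conjugate [TopologicalSpace A] [TopologicalSpace B]
    (X : Set (ℤ → A)) (Y : Set (ℤ → B)) : Prop :=
  ∃ φ : X ≃ₜ Y, ∀ x x' : X, (x' : ℤ → A) = shift (x : ℤ → A) →
    (φ x' : ℤ → B) = shift (φ x : ℤ → B)

/-- The cylinder of a word of length `n` placed at positions `0,…,n-1`. -/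
def cylSet (n : ℕ) (w : Fin n → A) : Set (ℤ → A) :=
  { x | ∀ i : Fin n, x ((i : ℕ) : ℤ) = w i }

/-- Entropy of the partition of `A^ℤ` into cylinders of length `n`. -/
noncomputable def blockEntropy [Fintype A] [MeasurableSpace A]
    (μ : Measure (ℤ → A)) (n : ℕ) : ℝ :=
  ∑ w : Fin n → A, Real.negMulLog ((μ (cylSet n w)).toReal)

/-- Kolmogorov–Sinai entropy of a shift-invariant measure on `A^ℤ`,
computed with the natural (generating) partition into cylinders. -/
noncomputable def KSEntropy [Fintype A] [MeasurableSpace A]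
    (μ : Measure (ℤ → A)) : ℝ :=
  ⨅ n : ℕ, blockEntropy μ (n + 1) / (n + 1)

/-- A maximum measure: an ergodic shift-invariant Borel probability measure
carried by `X` whose Kolmogorov–Sinai entropy equals the topological entropy of `X`. -/
def IsMaxMeasure [Fintype A] [MeasurableSpace A]
    (X : Set (ℤ → A)) (μ : Measure (ℤ → A)) : Prop :=
  IsProbabilityMeasure μ ∧ μ Xᶜ = 0 ∧ Ergodic shift μ ∧ KSEntropy μ = hTop X

/-- The number of points of `X` fixed by the `n`-th power of the shift. -/
noncomputable def perCount (X : Set (ℤ → A)) (n : ℕ) : ℕ :=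
  Nat.card {x : ℤ → A | x ∈ X ∧ shift^[n] x = x}

/-- `x` is a bi-infinite concatenation of words from `W`: there is a
bi-infinite increasing unbounded sequence of cutting points such that each
block between consecutive cutting points is a word of `W`. -/
def IsConcatenation (W : Set (List A)) (x : ℤ → A) : Prop :=
  ∃ t : ℤ → ℤ, StrictMono t ∧ (∀ M : ℤ, ∃ i, t i ≤ M) ∧ (∀ M : ℤ, ∃ i, M ≤ t i) ∧
    ∀ i : ℤ, ∃ w ∈ W, (w.length : ℤ) = t (i + 1) - t i ∧ OccursAt w x (t i)

/-- A coded system: a subshift which is the closure of the set of all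
bi-infinite concatenations of words from some countable set of finite words. -/
def IsCoded [TopologicalSpace A] (X : Set (ℤ → A)) : Prop :=
  IsSubshift X ∧
  ∃ W : Set (List A), W.Countable ∧ X = closure { x : ℤ → A | IsConcatenation W x }

/-- `v` is a synchronizing word of `X`: it occurs in `X` and
`fol(uvw) = fol(vw)` whenever `uvw` occurs in `X`. -/
def IsSynchronizing (X : Set (ℤ → A)) (v : List A) : Prop :=
  v ∈ Lang X v.length ∧
  ∀ u w : List A, (u ++ v ++ w) ∈ Lang X (u ++ v ++ w).length →
    fol X (u ++ v ++ w) = fol X (v ++ w)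

/-- The set of sequences of `X` containing no occurrence of any synchronizing
word. -/
def NoSync (X : Set (ℤ → A)) : Set (ℤ → A) :=
  { x ∈ X | ∀ v : List A, IsSynchronizing X v → ∀ k : ℤ, ¬ OccursAt v x k }

/-! ### Auxiliary machinery -/

section Aux

open Topology

variable {α : Type*}

lemma log_nat_nonneg (m : ℕ) : 0 ≤ Real.log m := by
  rcases Nat.eq_zero_or_pos m with h | h
  · simp [h]
  · exact Real.log_nonneg (by exact_mod_cast h)

lemma log_div_nonneg (m n : ℕ) : 0 ≤ Real.log m / n :=
  div_nonneg (log_nat_nonneg m) (Nat.cast_nonneg n)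

lemma log_card_div_le {m K : ℕ} (n : ℕ) (h : m ≤ K ^ n) :
    Real.log m / n ≤ Real.log K := by
  rcases Nat.eq_zero_or_pos n with hn | hn
  · simp [hn, log_nat_nonneg K]
  rcases Nat.eq_zero_or_pos m with hm | hm
  · simp [hm, log_nat_nonneg K]
  rw [div_le_iff₀ (by exact_mod_cast hn), mul_comm]
  calc Real.log m ≤ Real.log (K ^ n : ℕ) :=
        Real.log_le_log (by exact_mod_cast hm) (by exact_mod_cast h)
    _ = n * Real.log K := by push_cast [Real.log_pow]; ring

lemma card_len_le (α : Type*) [Fintype α] (n : ℕ) :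
    Nat.card {u : List α | u.length = n} ≤ (Fintype.card α) ^ n := by
  haveI := (List.finite_length_eq α n).to_subtype
  have hinj : Function.Injective
      (fun u : {u : List α | u.length = n} => fun i : Fin n => u.1.get (i.cast u.2.symm)) := by
    intro u v huv
    ext1
    apply List.ext_get (u.2.trans v.2.symm)
    intro i h1 h2
    have := congrFun huv ⟨i, u.2 ▸ h1⟩
    simpa using this
  calc Nat.card {u : List α | u.length = n} ≤ Nat.card (Fin n → α) :=
        Nat.card_le_card_of_injective _ hinj
    _ = (Fintype.card α) ^ n := by simp [Nat.card_eq_fintype_card]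

lemma card_subset_len_le {α : Type*} [Fintype α] {S : Set (List α)} {n : ℕ}
    (hS : ∀ u ∈ S, u.length = n) : Nat.card S ≤ (Fintype.card α) ^ n := by
  refine le_trans ?_ (card_len_le α n)
  haveI := (List.finite_length_eq α n).to_subtype
  exact Nat.card_le_card_of_injective
    (fun u : S => (⟨u.1, hS u.1 u.2⟩ : {u : List α | u.length = n}))
    (fun u v huv => by
      apply Subtype.ext
      have := congrArg Subtype.val huv
      exact this)

lemma limsup_le_of_le_tendsto {f g : ℕ → ℝ} {L : ℝ} (h0 : ∀ n, 0 ≤ f n)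
    (hle : ∀ᶠ n in atTop, f n ≤ g n) (hg : Tendsto g atTop (𝓝 L)) :
    limsup f atTop ≤ L := by
  have h1 : limsup f atTop ≤ limsup g atTop :=
    limsup_le_limsup hle
      (isCoboundedUnder_le_of_le atTop h0)
      hg.isBoundedUnder_le
  rwa [hg.limsup_eq] at h1

lemma fekete_head_bound {a : ℕ → ℝ} {H c : ℝ} {n m₀ : ℕ} (hn : 1 ≤ n)
    (hlim : Tendsto (fun j => a j / j) atTop (𝓝 H))
    (hstep : ∀ m, m₀ ≤ m → a (n + m) ≤ a m + c) : H ≤ c / n := by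
  have key : ∀ k : ℕ, a (m₀ + k * n) ≤ a m₀ + k * c := by
    intro k
    induction k with
    | zero => simp
    | succ k ih =>
      have h1 : m₀ + (k + 1) * n = n + (m₀ + k * n) := by ring
      have h2 := hstep (m₀ + k * n) (by omega)
      rw [h1]
      calc a (n + (m₀ + k*n)) ≤ a (m₀ + k*n) + c := h2
        _ ≤ a m₀ + k * c + c := by linarith
        _ = a m₀ + (k+1 : ℕ) * c := by push_cast; ring
  have htend : Tendsto (fun k : ℕ => m₀ + k * n) atTop atTop :=
    tendsto_atTop_mono (fun k => by
      have := Nat.le_mul_of_pos_right k (show 0 < n by omega)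
      simp only [id]; omega) tendsto_id
  have hs : Tendsto (fun k : ℕ => a (m₀ + k * n) / ((m₀ + k * n : ℕ) : ℝ)) atTop (𝓝 H) :=
    hlim.comp htend
  have hb : Tendsto (fun k : ℕ => (a m₀ + k * c) / ((m₀ + k * n : ℕ) : ℝ)) atTop (𝓝 (c / n)) := by
    have heq : ∀ᶠ k : ℕ in atTop, (a m₀ / k + c) / ((m₀ : ℝ) / k + n)
        = (a m₀ + k * c) / ((m₀ + k * n : ℕ) : ℝ) := by
      filter_upwards [eventually_ge_atTop 1] with k hk
      have hk0 : (k : ℝ) ≠ 0 := by positivity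
      push_cast
      have hd : (m₀:ℝ) + (k:ℝ) * n ≠ 0 := by
        have h1 : (0:ℝ) < (k:ℝ) * n := by
          have : (0:ℝ) < (k:ℝ) := by exact_mod_cast hk
          have h2 : (0:ℝ) < (n:ℝ) := by exact_mod_cast hn
          positivity
        positivity
      field_simp
    have h2 : Tendsto (fun k : ℕ => (a m₀ / k + c) / ((m₀ : ℝ) / k + n)) atTop
        (𝓝 ((0 + c)/(0 + n))) := by
      apply Tendsto.div
      · exact (tendsto_const_div_atTop_nhds_zero_nat (a m₀)).add tendsto_const_nhds
      · exact (tendsto_const_div_atTop_nhds_zero_nat (m₀ : ℝ)).add tendsto_const_nhds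
      · have : (0:ℝ) < n := by exact_mod_cast hn
        positivity
    simp only [zero_add] at h2
    exact h2.congr' heq
  refine le_of_tendsto_of_tendsto' hs hb (fun k => ?_)
  rcases Nat.eq_zero_or_pos (m₀ + k * n) with hz | hp
  · simp [hz]
  · have hpos : (0:ℝ) < ((m₀ + k * n : ℕ) : ℝ) := by exact_mod_cast hp
    exact (div_le_div_iff_of_pos_right hpos).2 (key k)

variable [TopologicalSpace α] [DiscreteTopology α]

lemma isOpen_agree (s : Finset ℤ) (c : ℤ → α) :
    IsOpen {y : ℤ → α | ∀ t ∈ s, y t = c t} := by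
  have : {y : ℤ → α | ∀ t ∈ s, y t = c t} = ⋂ t ∈ s, {y : ℤ → α | y t = c t} := by
    ext y; simp
  rw [this]
  refine isOpen_biInter_finset (fun t _ => ?_)
  have h1 : {y : ℤ → α | y t = c t} = (fun y : ℤ → α => y t) ⁻¹' {c t} := rfl
  rw [h1]
  exact (continuous_apply t).isOpen_preimage _ (isOpen_discrete _)

lemma exists_cluster [Finite α] (u : ℕ → (ℤ → α)) :
    ∃ x : ℤ → α, MapClusterPt x atTop u := by
  obtain ⟨x, hx⟩ := exists_clusterPt_of_compactSpace (map u atTop)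
  exact ⟨x, hx⟩

lemma cluster_mem_closed {u : ℕ → (ℤ → α)} {x : ℤ → α} (h : MapClusterPt x atTop u)
    {X : Set (ℤ → α)} (hX : IsClosed X) (hu : ∀ n, u n ∈ X) : x ∈ X := by
  have h1 : ClusterPt x (𝓟 (Set.range u)) :=
    h.clusterPt.mono (le_principal_iff.2 range_mem_map)
  have h2 : x ∈ closure (Set.range u) := mem_closure_iff_clusterPt.2 h1
  exact hX.closure_subset ((closure_mono (Set.range_subset_iff.2 hu)) h2)

lemma cluster_frequently {u : ℕ → (ℤ → α)} {x : ℤ → α} (h : MapClusterPt x atTop u)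
    (s : Finset ℤ) : ∀ N : ℕ, ∃ n ≥ N, ∀ t ∈ s, u n t = x t := by
  intro N
  have hU : {y : ℤ → α | ∀ t ∈ s, y t = x t} ∈ 𝓝 x :=
    (isOpen_agree s x).mem_nhds (by simp)
  have := (mapClusterPt_iff_frequently.1 h) _ hU
  exact frequently_atTop.1 this N

end Aux

/-! ### Core development -/

section Core

open Topology

variable {A : Type*}

/-- Shift by an arbitrary integer amount. -/
def shiftZ (c : ℤ) (x : ℤ → A) : ℤ → A := fun t => x (t + c)

lemma shiftZ_mem {X : Set (ℤ → A)} (hX : shift '' X = X) (c : ℤ) :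
    ∀ {x}, x ∈ X → shiftZ c x ∈ X := by
  induction c using Int.induction_on with
  | zero => intro x hx; have : shiftZ 0 x = x := by funext t; simp [shiftZ]
            rwa [this]
  | succ c ih =>
    intro x hx
    have h1 : shiftZ (c+1) x = shift (shiftZ c x) := by
      funext t; simp only [shiftZ, shift]; congr 1; ring
    rw [h1, ← hX]
    exact Set.mem_image_of_mem _ (ih hx)
  | pred c ih =>
    intro x hx
    have h2 : shift (shiftZ (-c - 1) x) = shiftZ (-c) x := by
      funext t; simp only [shiftZ, shift]; congr 1; ring
    have hm : shiftZ (-c) x ∈ X := ih hx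
    rw [← hX] at hm
    obtain ⟨y, hy, hyx⟩ := hm
    have : y = shiftZ (-c - 1) x := by
      funext t
      have hc := congrFun hyx (t - 1)
      have h3 := congrFun h2 (t - 1)
      simp only [shift, sub_add_cancel] at hc h3
      rw [hc, ← h3]
    rwa [← this]

/-- `x` has no occurrence of a synchronizing word lying entirely in `(-∞, N-1]`. -/
def PastFree (X : Set (ℤ → A)) (x : ℤ → A) (N : ℕ) : Prop :=
  ∀ v : List A, IsSynchronizing X v → ∀ k : ℤ, k + v.length ≤ (N : ℤ) → ¬ OccursAt v x k

/-- Words of length `n` sitting at the right end of a sync-free region of an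
element of `X`, with an extra margin `m` of sync-freeness to the right. -/
def GSet (X : Set (ℤ → A)) (n m : ℕ) : Set (List A) :=
  { u | u.length = n ∧ ∃ x ∈ X, OccursAt u x 0 ∧ PastFree X x (n + m) }

lemma pastFree_mono {X : Set (ℤ → A)} {x : ℤ → A} {N N' : ℕ} (h : N' ≤ N)
    (hp : PastFree X x N) : PastFree X x N' :=
  fun v hv k hk => hp v hv k (hk.trans (by exact_mod_cast h))

lemma pastFree_shiftZ {X : Set (ℤ → A)} {x : ℤ → A} {N : ℕ} (hp : PastFree X x N)
    {c : ℤ} {N' : ℕ} (h : (N' : ℤ) + c ≤ N) : PastFree X (shiftZ c x) N' := by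
  intro v hv k hk hocc
  refine hp v hv (k + c) (by omega) ?_
  intro i
  have := hocc i
  simpa [shiftZ, add_right_comm] using this

lemma GSet_anti (X : Set (ℤ → A)) (n : ℕ) {m m' : ℕ} (h : m' ≤ m) :
    GSet X n m ⊆ GSet X n m' := by
  rintro u ⟨hlen, x, hx, hocc, hpf⟩
  exact ⟨hlen, x, hx, hocc, pastFree_mono (by omega) hpf⟩

lemma GSet_finite [Finite A] (X : Set (ℤ → A)) (n m : ℕ) : (GSet X n m).Finite :=
  (List.finite_length_eq A n).subset (fun _ hu => hu.1)

lemma Lang_finite [Finite A] (X : Set (ℤ → A)) (n : ℕ) : (Lang X n).Finite :=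
  (List.finite_length_eq A n).subset (fun _ hu => hu.1)

lemma take_mem_GSet {X : Set (ℤ → A)} {u : List A} {n m : ℕ}
    (h : u ∈ GSet X (n + m) 0) : u.take n ∈ GSet X n m := by
  obtain ⟨hlen, x, hx, hocc, hpf⟩ := h
  refine ⟨by simp [hlen], x, hx, ?_, by simpa using hpf⟩
  intro i
  have hi : (i : ℕ) < u.length := by
    have := i.isLt; simp [hlen] at this ⊢; omega
  have := hocc ⟨i, hi⟩
  simpa [List.get_eq_getElem, List.getElem_take] using this

lemma drop_mem_GSet {X : Set (ℤ → A)} (hX : shift '' X = X) {u : List A} {n m : ℕ}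
    (h : u ∈ GSet X (n + m) 0) : u.drop n ∈ GSet X m 0 := by
  obtain ⟨hlen, x, hx, hocc, hpf⟩ := h
  refine ⟨by simp [hlen], shiftZ n x, shiftZ_mem hX n hx, ?_, ?_⟩
  · intro i
    have hi : n + (i : ℕ) < u.length := by
      have := i.isLt; simp [hlen] at this ⊢; omega
    have := hocc ⟨n + i, hi⟩
    simp only [List.get_eq_getElem] at this ⊢
    rw [List.getElem_drop]
    rw [← this]
    simp [shiftZ]
    congr 1
    push_cast
    ring
  · exact pastFree_shiftZ hpf (c := (n:ℤ)) (by push_cast; omega)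

lemma GSet_card_split [Fintype A] {X : Set (ℤ → A)} (hX : shift '' X = X) (n m : ℕ) :
    Nat.card (GSet X (n + m) 0) ≤ Nat.card (GSet X n m) * Nat.card (GSet X m 0) := by
  haveI := (GSet_finite X n m).to_subtype
  haveI := (GSet_finite X m 0).to_subtype
  haveI := (GSet_finite X (n+m) 0).to_subtype
  have hinj : Function.Injective (fun u : GSet X (n + m) 0 =>
      ((⟨u.1.take n, take_mem_GSet u.2⟩ : GSet X n m),
       (⟨u.1.drop n, drop_mem_GSet hX u.2⟩ : GSet X m 0))) := by
    intro u v huv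
    have h1 := congrArg (fun p => (p.1 : List A)) huv
    have h2 := congrArg (fun p => (p.2 : List A)) huv
    simp only at h1 h2
    apply Subtype.ext
    rw [← List.take_append_drop n u.1, ← List.take_append_drop n v.1, h1, h2]
  calc Nat.card (GSet X (n + m) 0)
      ≤ Nat.card (GSet X n m × GSet X m 0) := Nat.card_le_card_of_injective _ hinj
    _ = _ := Nat.card_prod _ _

lemma GSet_nonempty_all {X : Set (ℤ → A)} (hX : shift '' X = X) {N : ℕ}
    (h : (GSet X N 0).Nonempty) : ∀ j, (GSet X j 0).Nonempty := by
  obtain ⟨u, hlen, x, hx, hocc, hpf⟩ := h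
  intro j
  refine ⟨List.ofFn (fun i : Fin j => shiftZ ((N : ℤ) - j) x i),
    by simp, shiftZ ((N : ℤ) - j) x, shiftZ_mem hX _ hx, ?_, ?_⟩
  · intro i
    have hi : (i : ℕ) < j := by have := i.isLt; simpa using this
    simp [List.get_ofFn]
  · exact pastFree_shiftZ hpf (by push_cast; omega)

end Core

section Ray

variable {A : Type*}

lemma wordOf_length (b : ℕ → A) (m : ℕ) : (wordOf b m).length = m + 1 := by
  simp [wordOf]

lemma wordOf_get (b : ℕ → A) (m : ℕ) (i : ℕ) (h : i < (wordOf b m).length) :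
    (wordOf b m).get ⟨i, h⟩ = b (m - i) := by
  simp [wordOf]

lemma wordOf_getElem (b : ℕ → A) (m i : ℕ) (h : i < (wordOf b m).length) :
    (wordOf b m)[i] = b (m - i) := by
  simp [wordOf]

/-- No synchronizing word occurs anywhere in the ray `b` of an extendable
left constraint. -/
lemma ray_no_sync {X : Set (ℤ → A)} (hXc : shift '' X = X) {b : ℕ → A}
    (hinf : ∀ N : ℕ, ∃ m, N ≤ m ∧ IsLeftConstraint X (wordOf b m)) :
    ∀ v : List A, IsSynchronizing X v → ∀ s : ℕ,
      ¬ (∀ t : Fin v.length, v.get t = b (s + v.length - 1 - t)) := by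
  intro v hv s hocc
  obtain ⟨m, hm, hLC⟩ := hinf (s + v.length + 1)
  have hWlen : (wordOf b m).length = m + 1 := wordOf_length b m
  have hWne : (wordOf b m) ≠ [] := List.ne_nil_of_length_pos (by omega)
  obtain ⟨-, hfolne, hss⟩ := hLC
  obtain ⟨y0, hy0⟩ := Set.nonempty_iff_ne_empty.2 hfolne
  obtain ⟨Bp, hBX, hB, -⟩ := hy0
  have hOccW : OccursAt (wordOf b m) Bp 0 := by
    intro i; simpa using hB i
  have hWlang : (wordOf b m) ∈ Lang X (wordOf b m).length := ⟨rfl, Bp, hBX, hOccW⟩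
  have hTlen : (wordOf b m).tail.length = m := by
    simp [hWlen, List.length_tail]
  have hsB : shift Bp ∈ X := by
    rw [← hXc]; exact Set.mem_image_of_mem _ hBX
  have hOccT : OccursAt (wordOf b m).tail (shift Bp) 0 := by
    intro i
    have hi1 : (i : ℕ) + 1 < (wordOf b m).length := by
      have := i.isLt; omega
    have h2 := hOccW ⟨(i : ℕ) + 1, hi1⟩
    simp only [List.get_eq_getElem, zero_add] at h2 ⊢
    rw [List.getElem_tail, shift, ← h2]
    first
    | rfl
    | (congr 1; push_cast; ring)
  have hTlang : (wordOf b m).tail ∈ Lang X (wordOf b m).tail.length :=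
    ⟨rfl, shift Bp, hsB, hOccT⟩
  have hvmid : (((wordOf b m).tail.drop (m - s - v.length)).take v.length) = v := by
    apply List.ext_get
    · simp only [List.length_take, List.length_drop, hTlen]; omega
    · intro i h1 h2
      have hov := hocc ⟨i, h2⟩
      simp only [List.get_eq_getElem] at hov ⊢
      simp only [List.getElem_take, List.getElem_drop, List.getElem_tail, wordOf,
        List.getElem_map, List.getElem_range]
      rw [hov]
      congr 1
      omega
  have hdecT : (wordOf b m).tail
      = (wordOf b m).tail.take (m - s - v.length) ++ v
        ++ (((wordOf b m).tail.drop (m - s - v.length)).drop v.length) := by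
    have h1 : (wordOf b m).tail.drop (m - s - v.length)
        = v ++ (((wordOf b m).tail.drop (m - s - v.length)).drop v.length) := by
      conv_lhs => rw [← List.take_append_drop v.length
        ((wordOf b m).tail.drop (m - s - v.length))]
      rw [hvmid]
    calc (wordOf b m).tail
        = (wordOf b m).tail.take (m - s - v.length)
          ++ (wordOf b m).tail.drop (m - s - v.length) :=
          (List.take_append_drop _ _).symm
      _ = (wordOf b m).tail.take (m - s - v.length)
          ++ (v ++ (((wordOf b m).tail.drop (m - s - v.length)).drop v.length)) := by
          rw [← h1]
      _ = _ := by rw [List.append_assoc]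
  have hWhead : (wordOf b m).head hWne = b m := by
    rw [List.head_eq_getElem_zero hWne]
    have := wordOf_get b m 0 (by omega)
    simpa [List.get_eq_getElem] using this
  have hdecW : (wordOf b m)
      = (b m :: (wordOf b m).tail.take (m - s - v.length)) ++ v
        ++ (((wordOf b m).tail.drop (m - s - v.length)).drop v.length) := by
    rw [List.cons_append, List.cons_append, ← hdecT, ← hWhead]
    exact (List.cons_head_tail hWne).symm
  have e1 := hv.2 (b m :: (wordOf b m).tail.take (m - s - v.length))
    (((wordOf b m).tail.drop (m - s - v.length)).drop v.length)
    (by rw [← hdecW]; exact hWlang)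
  have e2 := hv.2 ((wordOf b m).tail.take (m - s - v.length))
    (((wordOf b m).tail.drop (m - s - v.length)).drop v.length)
    (by rw [← hdecT]; exact hTlang)
  have heq : fol X (wordOf b m) = fol X (wordOf b m).tail := by
    conv_lhs => rw [hdecW]
    rw [e1]
    conv_rhs => rw [hdecT]
    rw [e2]
  exact hss.ne heq

end Ray

section TailMem

open Topology

variable {A : Type*} [Fintype A] [TopologicalSpace A] [DiscreteTopology A]

/-- The tail of an extendable left constraint lies in `GSet X (n-1) 0`. -/
lemma tail_mem_GSet {X : Set (ℤ → A)} (hX : IsSubshift X) {n : ℕ} (hn : 1 ≤ n)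
    {w : List A} (hw : w ∈ ELC X n) : w.tail ∈ GSet X (n - 1) 0 := by
  obtain ⟨hlen, hLCw, b, hword, hinf⟩ := hw
  have hray := ray_no_sync hX.2 hinf
  -- construct a point of X whose entire past is the ray b
  have hsel : ∀ k : ℕ, ∃ y : ℤ → A, y ∈ X ∧
      ∀ t : ℤ, -(k:ℤ) ≤ t → t ≤ 0 → y t = b (-t).toNat := by
    intro k
    obtain ⟨m, hm, hLC⟩ := hinf k
    obtain ⟨-, hfolne, -⟩ := hLC
    obtain ⟨y0, hy0⟩ := Set.nonempty_iff_ne_empty.2 hfolne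
    obtain ⟨Bp, hBX, hB, -⟩ := hy0
    refine ⟨shiftZ m Bp, shiftZ_mem hX.2 _ hBX, ?_⟩
    intro t ht1 ht2
    have hlt : (t + m).toNat < (wordOf b m).length := by
      rw [wordOf_length]; omega
    have hBt := hB ⟨(t + m).toNat, hlt⟩
    rw [wordOf_get] at hBt
    have harg : (((t + m).toNat : ℕ) : ℤ) = t + m := by omega
    rw [harg] at hBt
    simp only [shiftZ]
    rw [hBt]
    congr 1
    omega
  choose y hyX hyb using hsel
  obtain ⟨x, hx⟩ := exists_cluster y
  have hxX : x ∈ X := cluster_mem_closed hx hX.1 hyX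
  have hxpast : ∀ t : ℤ, t ≤ 0 → x t = b (-t).toNat := by
    intro t ht
    obtain ⟨k, hk, hagree⟩ := cluster_frequently hx {t} (-t).toNat
    rw [← hagree t (by simp)]
    exact hyb k t (by omega) ht
  -- the witness
  set c : ℤ := (n : ℤ) - 2 with hc
  have hzX : shiftZ (-c) x ∈ X := shiftZ_mem hX.2 _ hxX
  have hzval : ∀ t : ℤ, t ≤ c → shiftZ (-c) x t = b (c - t).toNat := by
    intro t ht
    have : t + -c ≤ 0 := by omega
    simp only [shiftZ]
    rw [hxpast _ this]
    congr 1
    omega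
  have hwget : ∀ (i : ℕ) (h : i < w.length), w.get ⟨i, h⟩ = b (n - 1 - i) := by
    intro i h
    simp only [List.get_eq_getElem]
    rw [List.getElem_of_eq hword.symm h, wordOf_getElem]
    congr 1
    omega
  refine ⟨by rw [List.length_tail, hlen], shiftZ (-c) x, hzX, ?_, ?_⟩
  · -- OccursAt w.tail
    rintro ⟨j, hj⟩
    have hj' : j < w.length - 1 := by
      rw [List.length_tail] at hj; exact hj
    have hj1 : j + 1 < w.length := by omega
    have h1 : w.tail.get ⟨j, hj⟩ = b (n - 2 - j) := by
      rw [List.get_tail w j hj hj1, hwget _ hj1]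
      congr 1
      omega
    show shiftZ (-c) x (0 + (j : ℕ)) = w.tail.get ⟨j, hj⟩
    rw [h1]
    have htc : (0 : ℤ) + (j : ℕ) ≤ c := by
      rw [hlen] at hj'
      omega
    rw [hzval _ htc]
    congr 1
    omega
  · -- PastFree
    intro v hv k hkl hocc
    refine hray v hv (c - k - v.length + 1).toNat ?_
    intro t
    have htl := t.isLt
    have hkt : k + (t : ℕ) ≤ c := by
      have hN : ((n - 1 + 0 : ℕ) : ℤ) = (n : ℤ) - 1 := by omega
      rw [hN] at hkl
      omega
    have h1 := hocc t
    rw [hzval _ hkt] at h1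
    rw [← h1]
    congr 1
    omega

end TailMem

section Count

open Topology

variable {A : Type*} [Fintype A] [TopologicalSpace A] [DiscreteTopology A]

lemma ELC_finite (X : Set (ℤ → A)) (n : ℕ) : (ELC X n).Finite :=
  (List.finite_length_eq A n).subset (fun _ hu => hu.1)

lemma card_ELC_le {X : Set (ℤ → A)} (hX : IsSubshift X) {n : ℕ} (hn : 1 ≤ n) :
    Nat.card (ELC X n) ≤ Fintype.card A * Nat.card (GSet X (n - 1) 0) := by
  haveI := (ELC_finite X n).to_subtype
  haveI := (GSet_finite X (n-1) 0).to_subtype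
  have hne : ∀ u : ELC X n, u.1 ≠ [] := fun u => u.2.2.1.1
  have hinj : Function.Injective (fun u : ELC X n =>
      ((u.1.head (hne u) : A), (⟨u.1.tail, tail_mem_GSet hX hn u.2⟩ : GSet X (n-1) 0))) := by
    intro u v huv
    have h1 := congrArg Prod.fst huv
    have h2 := congrArg (fun p => (p.2 : List A)) huv
    simp only at h1 h2
    apply Subtype.ext
    rw [← List.cons_head_tail (hne u), ← List.cons_head_tail (hne v), h1, h2]
  calc Nat.card (ELC X n) ≤ Nat.card (A × GSet X (n-1) 0) :=
        Nat.card_le_card_of_injective _ hinj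
    _ = _ := by rw [Nat.card_prod, Nat.card_eq_fintype_card]

lemma exists_stab (X : Set (ℤ → A)) (n : ℕ) :
    ∃ m₀, ∀ m, m₀ ≤ m → GSet X n m = GSet X n m₀ := by
  have hanti : ∀ m m', m ≤ m' → GSet X n m' ⊆ GSet X n m :=
    fun m m' h => GSet_anti X n h
  obtain ⟨m₀, hm₀⟩ : ∃ m₀, Nat.card (GSet X n m₀) = sInf (Set.range (fun m => Nat.card (GSet X n m))) := by
    obtain ⟨m₀, hm₀⟩ := Nat.sInf_mem (Set.range_nonempty (fun m => Nat.card (GSet X n m)))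
    exact ⟨m₀, hm₀⟩
  refine ⟨m₀, fun m hm => ?_⟩
  refine Set.eq_of_subset_of_ncard_le (hanti _ _ hm) ?_ (GSet_finite X n m₀)
  rw [← Nat.card_coe_set_eq, ← Nat.card_coe_set_eq, hm₀]
  exact csInf_le (OrderBot.bddBelow _) ⟨m, rfl⟩

lemma stab_subset_Lang {X : Set (ℤ → A)} (hX : IsSubshift X) {n m₀ : ℕ}
    (hstab : ∀ m, m₀ ≤ m → GSet X n m = GSet X n m₀) :
    GSet X n m₀ ⊆ Lang (NoSync X) n := by
  intro u hu
  have hall : ∀ m, u ∈ GSet X n m := by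
    intro m
    rcases le_total m m₀ with h | h
    · exact GSet_anti X n h hu
    · rw [hstab m h]; exact hu
  have hsel : ∀ m, ∃ x : ℤ → A, x ∈ X ∧ OccursAt u x 0 ∧ PastFree X x (n + m) :=
    fun m => (hall m).2
  choose xw hxwX hxwOcc hxwPF using hsel
  obtain ⟨x, hx⟩ := exists_cluster xw
  have hxX : x ∈ X := cluster_mem_closed hx hX.1 hxwX
  refine ⟨hu.1, x, ⟨hxX, ?_⟩, ?_⟩
  · -- no synchronizing word occurs in x
    intro v hv k hocc
    obtain ⟨m, hm, hagree⟩ := cluster_frequently hx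
      (Finset.Icc k (k + v.length)) (k + v.length).toNat
    refine hxwPF m v hv k (by omega) ?_
    intro t
    have ht := t.isLt
    have harg : k + (t : ℕ) ∈ Finset.Icc k (k + v.length) := by
      rw [Finset.mem_Icc]; omega
    rw [hagree _ harg]
    exact hocc t
  · -- u occurs in x at 0
    intro i
    have hi := i.isLt
    obtain ⟨m, -, hagree⟩ := cluster_frequently hx (Finset.Icc 0 (u.length : ℤ)) 0
    have harg : (0 : ℤ) + (i : ℕ) ∈ Finset.Icc (0:ℤ) (u.length : ℤ) := by
      rw [Finset.mem_Icc]; omega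
    rw [← hagree _ harg]
    exact hxwOcc m i

lemma GSet_nonempty_pair {X : Set (ℤ → A)} (hX : shift '' X = X) {N : ℕ}
    (h : (GSet X N 0).Nonempty) (n m : ℕ) : (GSet X n m).Nonempty := by
  obtain ⟨u, hu⟩ := GSet_nonempty_all hX h (n + m)
  exact ⟨u.take n, take_mem_GSet hu⟩

end Count

open Topology

/-- A coded system for which the set of sequences containing
no synchronizing word is a subshift of topological entropy `< h_top(X)` is a
weak-QFT. -/
theorem coded_with_synchronizing_weakQFT
    {A : Type*} [Fintype A] [TopologicalSpace A] [DiscreteTopology A]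
    (X : Set (ℤ → A)) (hcoded : IsCoded X)
    (hsub : IsSubshift (NoSync X)) (hent : hTop (NoSync X) < hTop X) :
    IsWeakQFT X := by
  have hX : IsSubshift X := hcoded.1
  have hmin : hSCstar X ≤ hCstar X := min_le_left _ _
  refine ⟨hX, lt_of_le_of_lt hmin ?_⟩
  -- boundedness of the Lang-entropy terms
  have hLangBdd : IsBoundedUnder (· ≤ ·) atTop
      (fun n : ℕ => Real.log (Nat.card ↥(Lang (NoSync X) n)) / (n : ℝ)) := by
    refine isBoundedUnder_of ⟨Real.log ((Fintype.card A + 1 : ℕ)), fun n => ?_⟩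
    apply log_card_div_le n
    calc Nat.card (Lang (NoSync X) n) ≤ Fintype.card A ^ n :=
          card_subset_len_le (fun u hu => hu.1)
      _ ≤ (Fintype.card A + 1) ^ n := Nat.pow_le_pow_left (by omega) n
  have hTopNN : 0 ≤ hTop (NoSync X) := by
    unfold hTop
    exact le_limsup_of_frequently_le
      (Frequently.of_forall (fun n => log_div_nonneg _ _)) hLangBdd
  by_cases hbranch : ∀ n, ELC X n = ∅
  · -- no extendable left constraints at all
    have hzero : hCstar X = 0 := by
      unfold hCstar
      have hfun : (fun n : ℕ => Real.log (Nat.card ↥(ELC X n)) / (n : ℝ))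
          = fun _ => (0:ℝ) := by
        funext n
        rw [hbranch n]
        simp
      rw [hfun, limsup_const]
    rw [hzero]
    exact lt_of_le_of_lt hTopNN hent
  -- main branch
  push_neg at hbranch
  obtain ⟨n₀, hn₀⟩ := hbranch
  obtain ⟨w₀, hw₀⟩ := hn₀
  have hw₀ne : w₀ ≠ [] := hw₀.2.1.1
  have hn₀1 : 1 ≤ n₀ := by
    rcases Nat.eq_zero_or_pos n₀ with h0 | h; swap
    · exact h
    exfalso
    exact hw₀ne (List.length_eq_zero_iff.1 (by rw [hw₀.1, h0]))
  have hGne : ∀ j m, (GSet X j m).Nonempty :=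
    fun j m => GSet_nonempty_pair hX.2 ⟨w₀.tail, tail_mem_GSet hX hn₀1 hw₀⟩ j m
  haveI : Nonempty A := ⟨w₀.head hw₀ne⟩
  have hAc1 : 1 ≤ Fintype.card A := Fintype.card_pos
  have hGcard : ∀ j m, 1 ≤ Nat.card (GSet X j m) := by
    intro j m
    haveI := (GSet_finite X j m).to_subtype
    haveI : Nonempty (GSet X j m) := (hGne j m).to_subtype
    exact Nat.card_pos
  set a : ℕ → ℝ := fun j => Real.log (Nat.card (GSet X j 0)) with ha
  have hanonneg : ∀ j, 0 ≤ a j := fun j => log_nat_nonneg _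
  have hsubadd : Subadditive a := by
    intro p q
    have hcard : Nat.card (GSet X (p + q) 0)
        ≤ Nat.card (GSet X p 0) * Nat.card (GSet X q 0) := by
      calc Nat.card (GSet X (p+q) 0)
          ≤ Nat.card (GSet X p q) * Nat.card (GSet X q 0) := GSet_card_split hX.2 p q
        _ ≤ Nat.card (GSet X p 0) * Nat.card (GSet X q 0) :=
            Nat.mul_le_mul (Nat.card_mono (GSet_finite X p 0) (GSet_anti X p (Nat.zero_le q)))
              le_rfl
    simp only [ha]
    calc Real.log (Nat.card (GSet X (p+q) 0))
        ≤ Real.log ((Nat.card (GSet X p 0) * Nat.card (GSet X q 0) : ℕ)) :=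
          Real.log_le_log (by exact_mod_cast hGcard (p+q) 0) (by exact_mod_cast hcard)
      _ = Real.log (Nat.card (GSet X p 0)) + Real.log (Nat.card (GSet X q 0)) := by
          push_cast
          rw [Real.log_mul
            (by exact_mod_cast Nat.one_le_iff_ne_zero.1 (hGcard p 0))
            (by exact_mod_cast Nat.one_le_iff_ne_zero.1 (hGcard q 0))]
  have hbddb : BddBelow (Set.range fun j => a j / j) := by
    refine ⟨0, fun r hr => ?_⟩
    obtain ⟨j, rfl⟩ := hr
    exact div_nonneg (hanonneg j) (Nat.cast_nonneg j)
  have hlim := hsubadd.tendsto_lim hbddb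
  -- Step 1 : hCstar X ≤ lim
  have hstep1 : hCstar X ≤ hsubadd.lim := by
    unfold hCstar
    apply limsup_le_of_le_tendsto
      (g := fun n : ℕ => Real.log (Fintype.card A) / n + a (n-1) / ((n-1 : ℕ) : ℝ))
      (fun n => log_div_nonneg _ _)
    · filter_upwards [eventually_ge_atTop 2] with n hn2
      rcases Nat.eq_zero_or_pos (Nat.card (ELC X n)) with hc0 | hcpos
      · rw [hc0]
        simp only [Nat.cast_zero, Real.log_zero, zero_div]
        have := log_div_nonneg (Fintype.card A) n
        have h2 := div_nonneg (hanonneg (n-1)) (Nat.cast_nonneg (n-1))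
        push_cast at this ⊢
        linarith
      · have h1 : Nat.card (ELC X n) ≤ Fintype.card A * Nat.card (GSet X (n-1) 0) :=
          card_ELC_le hX (by omega)
        have h2 : Real.log (Nat.card (ELC X n))
            ≤ Real.log (Fintype.card A) + a (n-1) := by
          calc Real.log (Nat.card (ELC X n))
              ≤ Real.log ((Fintype.card A * Nat.card (GSet X (n-1) 0) : ℕ)) :=
                Real.log_le_log (by exact_mod_cast hcpos) (by exact_mod_cast h1)
            _ = _ := by
                push_cast
                rw [Real.log_mul
                  (by exact_mod_cast Nat.one_le_iff_ne_zero.1 hAc1)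
                  (by exact_mod_cast Nat.one_le_iff_ne_zero.1 (hGcard (n-1) 0))]
        have hnpos : (0:ℝ) < (n:ℝ) := by
          have : (0:ℕ) < n := by omega
          exact_mod_cast this
        have h3 : Real.log (Nat.card (ELC X n)) / n
            ≤ (Real.log (Fintype.card A) + a (n-1)) / n :=
          div_le_div_of_nonneg_right h2 hnpos.le
        have h5 : a (n-1) / (n:ℝ) ≤ a (n-1) / ((n-1 : ℕ) : ℝ) := by
          apply div_le_div_of_nonneg_left (hanonneg _)
          · have : (0:ℕ) < n - 1 := by omega
            exact_mod_cast this
          · have : (n - 1 : ℕ) ≤ n := by omega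
            exact_mod_cast this
        rw [add_div] at h3
        linarith
    · have h1 : Tendsto (fun n : ℕ => Real.log (Fintype.card A) / n) atTop (𝓝 0) :=
        tendsto_const_div_atTop_nhds_zero_nat _
      have h2 : Tendsto (fun n : ℕ => a (n-1) / ((n-1:ℕ):ℝ)) atTop (𝓝 hsubadd.lim) :=
        hlim.comp (tendsto_sub_atTop_nat 1)
      have := h1.add h2
      simpa using this
  -- Step 2 : lim ≤ hTop (NoSync X)
  have hstep2 : hsubadd.lim ≤ hTop (NoSync X) := by
    unfold hTop
    apply le_limsup_of_frequently_le ?_ hLangBdd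
    rw [frequently_atTop]
    intro N
    refine ⟨max N 1, le_max_left _ _, ?_⟩
    have hn1 : 1 ≤ max N 1 := le_max_right _ _
    obtain ⟨m₀, hstab⟩ := exists_stab X (max N 1)
    have hsubL := stab_subset_Lang hX hstab
    have hLcard : Nat.card (GSet X (max N 1) m₀) ≤ Nat.card (Lang (NoSync X) (max N 1)) :=
      Nat.card_mono (Lang_finite _ _) hsubL
    have hLpos : 1 ≤ Nat.card (Lang (NoSync X) (max N 1)) :=
      le_trans (hGcard (max N 1) m₀) hLcard
    have hstep : ∀ m, m₀ ≤ m → a ((max N 1) + m)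
        ≤ a m + Real.log (Nat.card (Lang (NoSync X) (max N 1))) := by
      intro m hm
      have hc1 : Nat.card (GSet X ((max N 1) + m) 0)
          ≤ Nat.card (Lang (NoSync X) (max N 1)) * Nat.card (GSet X m 0) := by
        calc Nat.card (GSet X ((max N 1) + m) 0)
            ≤ Nat.card (GSet X (max N 1) m) * Nat.card (GSet X m 0) :=
              GSet_card_split hX.2 _ m
          _ ≤ _ := by
              apply Nat.mul_le_mul ?_ le_rfl
              rw [hstab m hm]
              exact hLcard
      simp only [ha]
      calc Real.log (Nat.card (GSet X ((max N 1) + m) 0))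
          ≤ Real.log ((Nat.card (Lang (NoSync X) (max N 1)) * Nat.card (GSet X m 0) : ℕ)) :=
            Real.log_le_log (by exact_mod_cast hGcard _ 0) (by exact_mod_cast hc1)
        _ = _ := by
            push_cast
            rw [Real.log_mul
              (by exact_mod_cast Nat.one_le_iff_ne_zero.1 hLpos)
              (by exact_mod_cast Nat.one_le_iff_ne_zero.1 (hGcard m 0))]
            ring
    exact fekete_head_bound hn1 hlim hstep
  calc hCstar X ≤ hsubadd.lim := hstep1
    _ ≤ hTop (NoSync X) := hstep2
    _ < hTop X := hent

end QFTPaper
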